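/- Let X₁, …, Xₙ be i.i.d. uniform on the unit circle 𝕊¹. Fix ε ∈ (0, 1) and set r = 1 − n^{ε−1} and r̃ = 2·n^{ε−1}. Then there exists a constant C > 0 such that for all sufficiently large n, P( #{ j ∈ {2, …, n} : X_j ∈ B(r·X₁, r̃) } ≥ n^{ε/2} ) ≥ 1 − C/n^{ε/2}. -/

import Mathlib

open MeasureTheory ProbabilityTheory Filter Real
open scoped Classical

noncomputable def unifCircle : Measure ℂ :=
  Measure.map (fun θ : ℝ => Complex.exp (θ * Complex.I))
    ((volume (Set.Ioc (0 : ℝ) (2 * π)))⁻¹ • volume.restrict (Set.Ioc (0 : ℝ) (2 * π)))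

lemma circMap_measurable : Measurable (fun θ : ℝ => Complex.exp (θ * Complex.I)) :=
  (Complex.continuous_exp.comp (Complex.continuous_ofReal.mul continuous_const)).measurable

lemma circMap_periodic :
    Function.Periodic (fun θ : ℝ => Complex.exp (θ * Complex.I)) (2 * π) := by
  intro θ
  simp only
  push_cast
  rw [add_mul, Complex.exp_add, Complex.exp_two_pi_mul_I, mul_one]

/-- measure of a `2π`-periodic set in a period window does not depend on the window. -/
lemma periodic_set_vol (T : Set ℝ) (hT : MeasurableSet T)
    (hper : ∀ θ : ℝ, θ + 2 * π ∈ T ↔ θ ∈ T) (a : ℝ) :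
    volume (T ∩ Set.Ioc a (a + 2 * π)) = volume (T ∩ Set.Ioc 0 (2 * π)) := by
  have hf : Function.Periodic (T.indicator (1 : ℝ → ℝ)) (2 * π) := by
    intro θ
    by_cases h : θ ∈ T
    · rw [Set.indicator_of_mem h, Set.indicator_of_mem ((hper θ).2 h)]; rfl
    · rw [Set.indicator_of_notMem h, Set.indicator_of_notMem (fun hc => h ((hper θ).1 hc))]
  have h2π : (0 : ℝ) < 2 * π := by positivity
  have key := hf.intervalIntegral_add_eq a 0
  have conv : ∀ b : ℝ, ∫ x in b..(b + 2 * π), T.indicator (1 : ℝ → ℝ) x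
      = (volume (T ∩ Set.Ioc b (b + 2 * π))).toReal := by
    intro b
    rw [intervalIntegral.integral_of_le (by linarith), MeasureTheory.integral_indicator_one hT,
      measureReal_def, Measure.restrict_apply hT]
  rw [conv a, conv 0, zero_add] at key
  have fin : ∀ b : ℝ, volume (T ∩ Set.Ioc b (b + 2 * π)) ≠ ⊤ := fun b =>
    (lt_of_le_of_lt (measure_mono Set.inter_subset_right)
      (by rw [Real.volume_Ioc]; exact ENNReal.ofReal_lt_top)).ne
  have := fin a
  have := fin 0
  rw [zero_add] at this
  exact (ENNReal.toReal_eq_toReal_iff' (fin a) this).mp key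

lemma unifCircle_apply (s : Set ℂ) (hs : MeasurableSet s) :
    unifCircle s = (volume (Set.Ioc (0 : ℝ) (2 * π)))⁻¹ *
      volume ((fun θ : ℝ => Complex.exp (θ * Complex.I)) ⁻¹' s ∩ Set.Ioc 0 (2 * π)) := by
  rw [unifCircle, Measure.map_apply circMap_measurable hs, Measure.smul_apply,
    Measure.restrict_apply (circMap_measurable hs)]
  rfl

lemma circMap_preimage_periodic (s : Set ℂ) (θ : ℝ) :
    θ + 2 * π ∈ (fun θ : ℝ => Complex.exp (θ * Complex.I)) ⁻¹' s ↔
      θ ∈ (fun θ : ℝ => Complex.exp (θ * Complex.I)) ⁻¹' s := by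
  simp only [Set.mem_preimage, circMap_periodic θ]

lemma unifCircle_ball_rot (r ρ : ℝ) (x : ℂ) (hx : ‖x‖ = 1) :
    unifCircle (Metric.ball ((r : ℂ) * x) ρ) = unifCircle (Metric.ball ((r : ℂ)) ρ) := by
  have hx0 : x ≠ 0 := by intro h; rw [h] at hx; simp at hx
  set φ := Complex.arg x with hφ
  have hxe : Complex.exp ((φ : ℂ) * Complex.I) = x := by
    rw [← Complex.exp_log hx0, Complex.log]
    simp [hx, hφ]
  set T : Set ℝ := (fun θ : ℝ => Complex.exp (θ * Complex.I)) ⁻¹' Metric.ball ((r : ℂ)) ρ with hTdef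
  have hTm : MeasurableSet T := circMap_measurable measurableSet_ball
  have hpre : (fun θ : ℝ => Complex.exp (θ * Complex.I)) ⁻¹' Metric.ball ((r : ℂ) * x) ρ
      = (fun θ : ℝ => -φ + θ) ⁻¹' T := by
    ext θ
    simp only [Set.mem_preimage, Metric.mem_ball, Complex.dist_eq, hTdef]
    have key : Complex.exp ((θ : ℂ) * Complex.I) - (r : ℂ) * x
        = (Complex.exp (((-φ + θ : ℝ) : ℂ) * Complex.I) - (r : ℂ)) * x := by
      rw [sub_mul, ← hxe, ← Complex.exp_add]
      push_cast
      ring_nf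
    rw [key, norm_mul, hx, mul_one]
  have hIoc : Set.Ioc (0 : ℝ) (2 * π) = (fun θ : ℝ => -φ + θ) ⁻¹' Set.Ioc (-φ) (-φ + 2 * π) := by
    ext θ
    simp only [Set.mem_preimage, Set.mem_Ioc]
    constructor <;> intro h <;> constructor <;> linarith [h.1, h.2]
  have hvol : volume ((fun θ : ℝ => Complex.exp (θ * Complex.I)) ⁻¹' Metric.ball ((r : ℂ) * x) ρ
      ∩ Set.Ioc 0 (2 * π)) = volume (T ∩ Set.Ioc 0 (2 * π)) := by
    rw [hpre]
    have heq : (fun θ : ℝ => -φ + θ) ⁻¹' T ∩ Set.Ioc 0 (2 * π)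
        = (fun θ : ℝ => -φ + θ) ⁻¹' (T ∩ Set.Ioc (-φ) (-φ + 2 * π)) := by
      rw [Set.preimage_inter, ← hIoc]
    rw [heq, measure_preimage_add volume (-φ) _,
      periodic_set_vol T hTm (circMap_preimage_periodic _) (-φ)]
  rw [unifCircle_apply _ measurableSet_ball, unifCircle_apply _ measurableSet_ball, hvol]

lemma unifCircle_ball_lower {δ : ℝ} (hδ0 : 0 < δ) (hδ1 : δ < 1) :
    ENNReal.ofReal (δ / (8 * π)) ≤ unifCircle (Metric.ball (((1 - δ : ℝ) : ℂ)) (2 * δ)) := by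
  rw [unifCircle_apply _ measurableSet_ball]
  have hsub : Set.Ioc (0 : ℝ) (δ / 4) ⊆
      (fun θ : ℝ => Complex.exp (θ * Complex.I)) ⁻¹' Metric.ball (((1 - δ : ℝ) : ℂ)) (2 * δ)
        ∩ Set.Ioc 0 (2 * π) := by
    intro θ hθ
    obtain ⟨hθ0, hθ4⟩ := hθ
    have hπ : (3 : ℝ) < π := by linarith [Real.pi_gt_d6]
    constructor
    · simp only [Set.mem_preimage, Metric.mem_ball, Complex.dist_eq]
      have h1 : ‖(Complex.exp ((θ : ℂ) * Complex.I) - 1)‖ ≤ 2 * θ := by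
        have := Complex.norm_exp_sub_one_le (x := (θ : ℂ) * Complex.I) ?_
        · simp only [norm_mul, Complex.norm_I, Complex.norm_real, Real.norm_eq_abs, mul_one,
            abs_of_pos hθ0] at this
          exact this
        · simp only [norm_mul, Complex.norm_I, Complex.norm_real, Real.norm_eq_abs, mul_one]
          rw [abs_of_pos hθ0]; linarith
      have h2 : Complex.exp ((θ : ℂ) * Complex.I) - ((1 - δ : ℝ) : ℂ)
          = (Complex.exp ((θ : ℂ) * Complex.I) - 1) + (δ : ℂ) := by push_cast; ring
      calc ‖(Complex.exp ((θ : ℂ) * Complex.I) - ((1 - δ : ℝ) : ℂ))‖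
          ≤ ‖(Complex.exp ((θ : ℂ) * Complex.I) - 1)‖ + ‖((δ : ℂ))‖ := by
            rw [h2]; exact norm_add_le _ _
        _ ≤ 2 * θ + δ := by
            simp only [Complex.norm_real, Real.norm_eq_abs, abs_of_pos hδ0]; linarith
        _ < 2 * δ := by linarith
    · exact ⟨hθ0, by linarith⟩
  have harith : δ / (8 * π) = (2 * π)⁻¹ * (δ / 4) := by
    have h : (8:ℝ) * π = 4 * (2 * π) := by ring
    rw [h, ← div_div, div_eq_inv_mul (δ/4)]
  calc ENNReal.ofReal (δ / (8 * π))
      = (volume (Set.Ioc (0:ℝ) (2 * π)))⁻¹ * ENNReal.ofReal (δ / 4) := by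
        rw [harith, Real.volume_Ioc, sub_zero, ← ENNReal.ofReal_inv_of_pos (by positivity),
          ← ENNReal.ofReal_mul (by positivity)]
    _ ≤ _ := by
        refine mul_le_mul_right ?_ _
        have : ENNReal.ofReal (δ / 4) = volume (Set.Ioc (0:ℝ) (δ/4)) := by
          rw [Real.volume_Ioc, sub_zero]
        rw [this]
        exact measure_mono hsub

instance unifCircle_prob : IsProbabilityMeasure unifCircle := by
  constructor
  rw [unifCircle_apply _ MeasurableSet.univ]
  simp only [Set.preimage_univ, Set.univ_inter]
  rw [ENNReal.inv_mul_cancel]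
  · rw [Real.volume_Ioc, sub_zero]
    simp only [ne_eq, ENNReal.ofReal_eq_zero, not_le]
    positivity
  · rw [Real.volume_Ioc]
    exact ENNReal.ofReal_lt_top.ne

lemma unifCircle_ae_abs_one : ∀ᵐ x ∂unifCircle, ‖x‖ = 1 := by
  rw [unifCircle]
  have hm : MeasurableSet {x : ℂ | ‖x‖ = 1} :=
    continuous_norm.measurable (measurableSet_singleton 1)
  rw [MeasureTheory.ae_map_iff circMap_measurable.aemeasurable hm]
  filter_upwards with θ using Complex.norm_exp_ofReal_mul_I θ

lemma map_pair {Ω : Type*} [MeasurableSpace Ω] (P : Measure Ω) [IsProbabilityMeasure P]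
    (X : ℕ → Ω → ℂ) (hmeas : ∀ i, Measurable (X i))
    (hindep : iIndepFun X P)
    (hdist : ∀ i, Measure.map (X i) P = unifCircle)
    {i j : ℕ} (hij : i ≠ j) :
    Measure.map (fun ω => (X i ω, X j ω)) P = unifCircle.prod unifCircle := by
  have h := (indepFun_iff_map_prod_eq_prod_map_map (hmeas i).aemeasurable
    (hmeas j).aemeasurable).mp (hindep.indepFun hij)
  rw [h, hdist i, hdist j]

lemma ball2_measurable (r ρ : ℝ) :
    MeasurableSet {p : ℂ × ℂ | p.2 ∈ Metric.ball ((r : ℂ) * p.1) ρ} := by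
  have h : {p : ℂ × ℂ | p.2 ∈ Metric.ball ((r : ℂ) * p.1) ρ}
      = (fun p : ℂ × ℂ => dist p.2 ((r : ℂ) * p.1)) ⁻¹' (Set.Iio ρ) := rfl
  rw [h]
  exact (continuous_snd.dist (continuous_const.mul continuous_fst)).measurable measurableSet_Iio

lemma prob_pair {Ω : Type*} [MeasurableSpace Ω] (P : Measure Ω) [IsProbabilityMeasure P]
    (X : ℕ → Ω → ℂ) (hmeas : ∀ i, Measurable (X i))
    (hindep : iIndepFun X P)
    (hdist : ∀ i, Measure.map (X i) P = unifCircle)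
    (r ρ : ℝ) {j : ℕ} (hj : j ≠ 1) :
    P {ω | X j ω ∈ Metric.ball ((r : ℂ) * X 1 ω) ρ}
      = unifCircle (Metric.ball ((r : ℂ)) ρ) := by
  have hB := ball2_measurable r ρ
  have hset : {ω | X j ω ∈ Metric.ball ((r : ℂ) * X 1 ω) ρ}
      = (fun ω => (X 1 ω, X j ω)) ⁻¹' {p : ℂ × ℂ | p.2 ∈ Metric.ball ((r : ℂ) * p.1) ρ} := rfl
  rw [hset, ← Measure.map_apply ((hmeas 1).prodMk (hmeas j)) hB,
    map_pair P X hmeas hindep hdist (Ne.symm hj), Measure.prod_apply hB]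
  have hae : ∀ᵐ x ∂unifCircle,
      unifCircle (Prod.mk x ⁻¹' {p : ℂ × ℂ | p.2 ∈ Metric.ball ((r : ℂ) * p.1) ρ})
        = unifCircle (Metric.ball ((r : ℂ)) ρ) := by
    filter_upwards [unifCircle_ae_abs_one] with x hx
    have h1 : Prod.mk x ⁻¹' {p : ℂ × ℂ | p.2 ∈ Metric.ball ((r : ℂ) * p.1) ρ}
        = Metric.ball ((r : ℂ) * x) ρ := rfl
    rw [h1, unifCircle_ball_rot r ρ x hx]
  rw [lintegral_congr_ae hae, lintegral_const, measure_univ, mul_one]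

lemma ball3_measurable (r ρ : ℝ) :
    MeasurableSet {p : ℂ × (ℂ × ℂ) | p.2.1 ∈ Metric.ball ((r : ℂ) * p.1) ρ
      ∧ p.2.2 ∈ Metric.ball ((r : ℂ) * p.1) ρ} := by
  have h : {p : ℂ × (ℂ × ℂ) | p.2.1 ∈ Metric.ball ((r : ℂ) * p.1) ρ
      ∧ p.2.2 ∈ Metric.ball ((r : ℂ) * p.1) ρ}
      = (fun p : ℂ × (ℂ × ℂ) => dist p.2.1 ((r : ℂ) * p.1)) ⁻¹' (Set.Iio ρ)
        ∩ (fun p : ℂ × (ℂ × ℂ) => dist p.2.2 ((r : ℂ) * p.1)) ⁻¹' (Set.Iio ρ) := rfl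
  rw [h]
  exact (((continuous_fst.comp continuous_snd).dist
      (continuous_const.mul continuous_fst)).measurable measurableSet_Iio).inter
    (((continuous_snd.comp continuous_snd).dist
      (continuous_const.mul continuous_fst)).measurable measurableSet_Iio)

lemma prob_triple {Ω : Type*} [MeasurableSpace Ω] (P : Measure Ω) [IsProbabilityMeasure P]
    (X : ℕ → Ω → ℂ) (hmeas : ∀ i, Measurable (X i))
    (hindep : iIndepFun X P)
    (hdist : ∀ i, Measure.map (X i) P = unifCircle)
    (r ρ : ℝ) {j k : ℕ} (hj : j ≠ 1) (hk : k ≠ 1) (hjk : j ≠ k) :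
    P ({ω | X j ω ∈ Metric.ball ((r : ℂ) * X 1 ω) ρ}
        ∩ {ω | X k ω ∈ Metric.ball ((r : ℂ) * X 1 ω) ρ})
      = unifCircle (Metric.ball ((r : ℂ)) ρ) * unifCircle (Metric.ball ((r : ℂ)) ρ) := by
  have hB := ball3_measurable r ρ
  have hset : {ω | X j ω ∈ Metric.ball ((r : ℂ) * X 1 ω) ρ}
        ∩ {ω | X k ω ∈ Metric.ball ((r : ℂ) * X 1 ω) ρ}
      = (fun ω => (X 1 ω, (X j ω, X k ω))) ⁻¹'
        {p : ℂ × (ℂ × ℂ) | p.2.1 ∈ Metric.ball ((r : ℂ) * p.1) ρ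
          ∧ p.2.2 ∈ Metric.ball ((r : ℂ) * p.1) ρ} := rfl
  have hmap : Measure.map (fun ω => (X 1 ω, (X j ω, X k ω))) P
      = unifCircle.prod (unifCircle.prod unifCircle) := by
    have hi : IndepFun (X 1) (fun ω => (X j ω, X k ω)) P :=
      (hindep.indepFun_prodMk hmeas j k 1 hj hk).symm
    rw [(indepFun_iff_map_prod_eq_prod_map_map (hmeas 1).aemeasurable
      ((hmeas j).prodMk (hmeas k)).aemeasurable).mp hi, hdist 1,
      map_pair P X hmeas hindep hdist hjk]
  rw [hset, ← Measure.map_apply ((hmeas 1).prodMk ((hmeas j).prodMk (hmeas k))) hB, hmap,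
    Measure.prod_apply hB]
  have hae : ∀ᵐ x ∂unifCircle,
      (unifCircle.prod unifCircle) (Prod.mk x ⁻¹' {p : ℂ × (ℂ × ℂ) |
          p.2.1 ∈ Metric.ball ((r : ℂ) * p.1) ρ ∧ p.2.2 ∈ Metric.ball ((r : ℂ) * p.1) ρ})
        = unifCircle (Metric.ball ((r : ℂ)) ρ) * unifCircle (Metric.ball ((r : ℂ)) ρ) := by
    filter_upwards [unifCircle_ae_abs_one] with x hx
    have h1 : Prod.mk x ⁻¹' {p : ℂ × (ℂ × ℂ) | p.2.1 ∈ Metric.ball ((r : ℂ) * p.1) ρ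
          ∧ p.2.2 ∈ Metric.ball ((r : ℂ) * p.1) ρ}
        = (Metric.ball ((r : ℂ) * x) ρ) ×ˢ (Metric.ball ((r : ℂ) * x) ρ) := rfl
    rw [h1, Measure.prod_prod, unifCircle_ball_rot r ρ x hx]
  rw [lintegral_congr_ae hae, lintegral_const, measure_univ, mul_one]

lemma cheb_arith {v m t : ℝ} (hv : 0 ≤ v) (hvm : v ≤ m) (h2t : 2 * t ≤ m)
    (ht : 32 * π ≤ t) (hmt : t * t ≤ 16 * π * m) :
    v / (m - t) ^ 2 ≤ 64 * π / t := by
  have hπ : (0:ℝ) < π := Real.pi_pos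
  have hπ3 : (3:ℝ) < π := Real.pi_gt_three
  have ht0 : (0:ℝ) < t := by nlinarith
  have hm0 : (0:ℝ) < m := by nlinarith
  have h1 : v / (m - t) ^ 2 ≤ 4 / m := by
    rw [div_le_div_iff₀ (by nlinarith) hm0]
    nlinarith [mul_le_mul_of_nonneg_right hvm hm0.le,
      mul_nonneg (by linarith : (0:ℝ) ≤ m - 2*t) (by linarith : (0:ℝ) ≤ 3*m - 2*t)]
  have h2 : 4 / m ≤ 64 * π / t := by
    rw [div_le_div_iff₀ hm0 ht0]
    nlinarith [mul_le_mul_of_nonneg_right ht ht0.le, mul_pos hπ ht0]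
  linarith

/-- For i.i.d. roots uniform on the unit circle, `ε ∈ (0, 1)`, `r = 1 - n^{ε-1}` and
`r̃ = 2 n^{ε-1}`, the ball `B(r X₁, r̃)` contains at least `n^{ε/2}` of the points
`X₂, …, Xₙ` with probability at least `1 - C/n^{ε/2}` for all large `n`. -/
theorem many_roots_in_ball_unifCircle
    {Ω : Type*} [MeasurableSpace Ω] (P : Measure Ω) [IsProbabilityMeasure P]
    (X : ℕ → Ω → ℂ) (hmeas : ∀ i, Measurable (X i))
    (hindep : iIndepFun X P)
    (hdist : ∀ i, Measure.map (X i) P = unifCircle)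
    (ε : ℝ) (hε₀ : 0 < ε) (hε₁ : ε < 1) :
    ∃ C : ℝ, 0 < C ∧ ∀ᶠ n : ℕ in atTop,
      1 - C / (n : ℝ) ^ (ε / 2) ≤
        (P {ω | (n : ℝ) ^ (ε / 2) ≤
          (((Finset.Icc 2 n).filter fun j =>
            X j ω ∈ Metric.ball (((1 - (n : ℝ) ^ (ε - 1) : ℝ) : ℂ) * X 1 ω)
              (2 * (n : ℝ) ^ (ε - 1))).card : ℝ)}).toReal := by
  have hπ : (0:ℝ) < π := Real.pi_pos
  refine ⟨64 * π, by positivity, ?_⟩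
  have htend : Tendsto (fun n : ℕ => (n : ℝ) ^ (ε / 2)) atTop atTop :=
    (tendsto_rpow_atTop (by positivity)).comp tendsto_natCast_atTop_atTop
  filter_upwards [eventually_ge_atTop 2, htend.eventually_ge_atTop (32 * π)] with n hn2 hn32
  have hn1 : (1:ℝ) < (n:ℝ) := by exact_mod_cast Nat.lt_of_lt_of_le one_lt_two hn2
  have hn0 : (0:ℝ) < (n:ℝ) := by linarith
  set δ : ℝ := (n : ℝ) ^ (ε - 1) with hδdef
  have hδ0 : 0 < δ := Real.rpow_pos_of_pos hn0 _
  have hδ1 : δ < 1 := Real.rpow_lt_one_of_one_lt_of_neg hn1 (by linarith)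
  set r : ℝ := 1 - δ with hrdef
  set ρ : ℝ := 2 * δ with hρdef
  set t : ℝ := (n : ℝ) ^ (ε / 2) with htdef
  have ht0 : 0 < t := Real.rpow_pos_of_pos hn0 _
  set Q : ENNReal := unifCircle (Metric.ball ((r : ℂ)) ρ) with hQdef
  set q : ℝ := Q.toReal with hqdef
  have hQtop : Q ≠ ⊤ := measure_ne_top _ _
  have hq0 : δ / (8 * π) ≤ q := by
    have hlow := unifCircle_ball_lower hδ0 hδ1
    calc δ / (8 * π) = (ENNReal.ofReal (δ / (8 * π))).toReal :=
          (ENNReal.toReal_ofReal (by positivity)).symm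
      _ ≤ Q.toReal := ENNReal.toReal_mono hQtop hlow
  have hqpos : 0 < q := lt_of_lt_of_le (by positivity) hq0
  have hq1 : q ≤ 1 := by
    have h1 : Q ≤ 1 := prob_le_one
    calc q ≤ (1 : ENNReal).toReal := ENNReal.toReal_mono (by simp) h1
      _ = 1 := by simp
  -- events
  set A : ℕ → Set Ω := fun j => {ω | X j ω ∈ Metric.ball ((r : ℂ) * X 1 ω) ρ} with hAdef
  have hAm : ∀ j, MeasurableSet (A j) := by
    intro j
    have : A j = (fun ω => (X 1 ω, X j ω)) ⁻¹'
        {p : ℂ × ℂ | p.2 ∈ Metric.ball ((r : ℂ) * p.1) ρ} := rfl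
    rw [this]
    exact ((hmeas 1).prodMk (hmeas j)) (ball2_measurable r ρ)
  have hPA : ∀ j ∈ Finset.Icc 2 n, P (A j) = Q := by
    intro j hj
    have : j ≠ 1 := by have := (Finset.mem_Icc.mp hj).1; omega
    exact prob_pair P X hmeas hindep hdist r ρ this
  have hPAA : ∀ j ∈ Finset.Icc 2 n, ∀ k ∈ Finset.Icc 2 n, j ≠ k → P (A j ∩ A k) = Q * Q := by
    intro j hj k hk hjk
    have hj1 : j ≠ 1 := by have := (Finset.mem_Icc.mp hj).1; omega
    have hk1 : k ≠ 1 := by have := (Finset.mem_Icc.mp hk).1; omega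
    exact prob_triple P X hmeas hindep hdist r ρ hj1 hk1 hjk
  set S : Ω → ℝ := fun ω => ∑ j ∈ Finset.Icc 2 n, (A j).indicator (1 : Ω → ℝ) ω with hSdef
  have hSmeas : Measurable S :=
    Finset.measurable_sum _ (fun j _ => measurable_const.indicator (hAm j))
  have hScard : ∀ ω : Ω, (((Finset.Icc 2 n).filter fun j =>
      X j ω ∈ Metric.ball ((r : ℂ) * X 1 ω) ρ).card : ℝ) = S ω := by
    intro ω
    rw [Finset.card_filter]
    push_cast
    refine Finset.sum_congr rfl fun j hj => ?_
    by_cases h : X j ω ∈ Metric.ball ((r : ℂ) * X 1 ω) ρ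
    · rw [if_pos h, Set.indicator_of_mem (by exact h : ω ∈ A j)]
      rfl
    · rw [if_neg h, Set.indicator_of_notMem (by exact h : ω ∉ A j)]
  have hcard : (Finset.Icc 2 n).card = n - 1 := by
    rw [Nat.card_Icc]; omega
  have hcastcard : (((Finset.Icc 2 n).card : ℕ) : ℝ) = (n : ℝ) - 1 := by
    rw [hcard, Nat.cast_sub (by omega), Nat.cast_one]
  have hintind : ∀ j : ℕ, Integrable ((A j).indicator (1 : Ω → ℝ)) P :=
    fun j => (integrable_const 1).indicator (hAm j)
  have hES : ∫ ω, S ω ∂P = ((n : ℝ) - 1) * q := by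
    rw [hSdef, integral_finset_sum _ (fun j _ => hintind j)]
    have hval : ∀ j ∈ Finset.Icc 2 n, ∫ ω, (A j).indicator (1 : Ω → ℝ) ω ∂P = q := by
      intro j hj
      rw [MeasureTheory.integral_indicator_one (hAm j), measureReal_def, hPA j hj]
    rw [Finset.sum_congr rfl hval, Finset.sum_const, nsmul_eq_mul, hcastcard]
  have hSsq : ∀ ω, S ω ^ 2 = ∑ j ∈ Finset.Icc 2 n, ∑ k ∈ Finset.Icc 2 n,
      ((A j ∩ A k).indicator (1 : Ω → ℝ)) ω := by
    intro ω
    rw [sq]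
    show (∑ j ∈ Finset.Icc 2 n, (A j).indicator (1 : Ω → ℝ) ω) *
      (∑ k ∈ Finset.Icc 2 n, (A k).indicator (1 : Ω → ℝ) ω) = _
    rw [Finset.sum_mul_sum]
    refine Finset.sum_congr rfl fun j _ => Finset.sum_congr rfl fun k _ => ?_
    rw [← Set.inter_indicator_mul]
    simp [Set.indicator_apply]
  have hES2 : ∫ ω, S ω ^ 2 ∂P
      = ((n : ℝ) - 1) * q + ((n : ℝ) - 1) * (((n : ℝ) - 2) * (q * q)) := by
    have heq : (fun ω => S ω ^ 2) = fun ω => ∑ j ∈ Finset.Icc 2 n, ∑ k ∈ Finset.Icc 2 n,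
        ((A j ∩ A k).indicator (1 : Ω → ℝ)) ω := funext hSsq
    have hint : ∀ j ∈ Finset.Icc 2 n, Integrable
        (fun ω => ∑ k ∈ Finset.Icc 2 n, ((A j ∩ A k).indicator (1 : Ω → ℝ)) ω) P :=
      fun j _ => integrable_finset_sum (μ := P) _
        (fun k _ => ((integrable_const 1).indicator ((hAm j).inter (hAm k)) :
          Integrable ((A j ∩ A k).indicator (1 : Ω → ℝ)) P))
    rw [heq, integral_finset_sum _ hint]
    have hint1 : ∀ j k : ℕ, Integrable ((A j ∩ A k).indicator (1 : Ω → ℝ)) P :=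
      fun j k => (integrable_const 1).indicator ((hAm j).inter (hAm k))
    have hval : ∀ j ∈ Finset.Icc 2 n, ∫ ω, ∑ k ∈ Finset.Icc 2 n,
        ((A j ∩ A k).indicator (1 : Ω → ℝ)) ω ∂P = q + ((n : ℝ) - 2) * (q * q) := by
      intro j hj
      rw [integral_finset_sum _ (fun k _ => hint1 j k)]
      have h1 : ∀ k ∈ Finset.Icc 2 n, ∫ ω, ((A j ∩ A k).indicator (1 : Ω → ℝ)) ω ∂P
          = (P (A j ∩ A k)).toReal :=
        fun k _ => MeasureTheory.integral_indicator_one ((hAm j).inter (hAm k))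
      rw [Finset.sum_congr rfl h1, ← Finset.add_sum_erase _ _ hj]
      have hdiag : (P (A j ∩ A j)).toReal = q := by rw [Set.inter_self, hPA j hj]
      have hoff : ∀ k ∈ (Finset.Icc 2 n).erase j, (P (A j ∩ A k)).toReal = q * q := by
        intro k hk
        rw [hPAA j hj k (Finset.mem_of_mem_erase hk)
          (Ne.symm (Finset.ne_of_mem_erase hk)), ENNReal.toReal_mul]
      rw [hdiag, Finset.sum_congr rfl hoff, Finset.sum_const, nsmul_eq_mul,
        Finset.card_erase_of_mem hj, hcard]
      have hc2 : ((n - 1 - 1 : ℕ) : ℝ) = (n : ℝ) - 2 := by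
        have h : n - 1 - 1 = n - 2 := by omega
        rw [h, Nat.cast_sub (by omega)]
        norm_num
      rw [hc2]
    rw [Finset.sum_congr rfl hval, Finset.sum_const, nsmul_eq_mul, hcastcard]
    ring
  have hS2 : MemLp S 2 P :=
    memLp_finset_sum _ (fun j _ =>
      memLp_indicator_const 2 (hAm j) 1 (Or.inr (measure_ne_top P _)))
  have hvar : variance S P ≤ ((n : ℝ) - 1) * q := by
    rw [variance_eq_sub hS2]
    have hpow : P[S ^ 2] = ∫ ω, S ω ^ 2 ∂P := rfl
    rw [hpow, hES2]
    have hPSe : P[S] = ∫ ω, S ω ∂P := rfl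
    rw [hPSe, hES]
    nlinarith [hqpos, hq1, hn1]
  set m : ℝ := ((n : ℝ) - 1) * q with hmdef
  have hPS : P[S] = m := hES
  have hmpos : 0 < m := mul_pos (by linarith) hqpos
  have hnn : (n : ℝ) * δ = (n : ℝ) ^ ε := by
    have h := (Real.rpow_add hn0 1 (ε - 1)).symm
    rw [Real.rpow_one] at h
    rw [hδdef, h]
    norm_num
  have htt : t * t = (n : ℝ) ^ ε := by
    rw [htdef, ← Real.rpow_add hn0, add_halves]
  have hn2R : (2:ℝ) ≤ (n:ℝ) := by exact_mod_cast hn2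
  have hm_low : (n : ℝ) ^ ε / (16 * π) ≤ m := by
    have h1 : (n : ℝ) / 2 ≤ (n : ℝ) - 1 := by linarith
    calc (n : ℝ) ^ ε / (16 * π) = ((n : ℝ) / 2) * (δ / (8 * π)) := by
          rw [← hnn]; field_simp; ring
      _ ≤ ((n : ℝ) - 1) * (δ / (8 * π)) :=
          mul_le_mul_of_nonneg_right h1 (by positivity)
      _ ≤ ((n : ℝ) - 1) * q := mul_le_mul_of_nonneg_left hq0 (by linarith)
  have h2t : 2 * t ≤ m := by
    have h1 : 2 * t ≤ (n : ℝ) ^ ε / (16 * π) := by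
      rw [← htt, le_div_iff₀ (by positivity)]
      nlinarith [mul_le_mul_of_nonneg_right hn32 ht0.le]
    linarith
  have hc0 : (0 : ℝ) < m - t := by linarith
  have hcheb := meas_ge_le_variance_div_sq (μ := P) hS2 hc0
  set G : Set Ω := {ω | t ≤ S ω} with hGdef
  have hGm : MeasurableSet G := measurableSet_le measurable_const hSmeas
  have hsub2 : Gᶜ ⊆ {ω | m - t ≤ |S ω - P[S]|} := by
    intro ω hω
    simp only [hGdef, Set.mem_compl_iff, Set.mem_setOf_eq, not_le] at hω
    simp only [Set.mem_setOf_eq, hPS]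
    calc m - t ≤ m - S ω := by linarith
      _ ≤ |S ω - m| := by rw [abs_sub_comm]; exact le_abs_self _
  have hbadR : (P Gᶜ).toReal ≤ 64 * π / t := by
    have h1 : P Gᶜ ≤ ENNReal.ofReal (variance S P / (m - t) ^ 2) :=
      le_trans (measure_mono hsub2) hcheb
    have h2 : (P Gᶜ).toReal ≤ variance S P / (m - t) ^ 2 := by
      calc (P Gᶜ).toReal ≤ (ENNReal.ofReal (variance S P / (m - t) ^ 2)).toReal :=
            ENNReal.toReal_mono ENNReal.ofReal_ne_top h1
        _ = variance S P / (m - t) ^ 2 :=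
            ENNReal.toReal_ofReal (div_nonneg (variance_nonneg S P) (sq_nonneg _))
    have hm16 : t * t ≤ 16 * π * m := by
      rw [htt]
      rw [div_le_iff₀ (by positivity)] at hm_low
      linarith
    have h3 : variance S P / (m - t) ^ 2 ≤ 64 * π / t :=
      cheb_arith (variance_nonneg S P) hvar h2t hn32 hm16
    linarith
  have hEG : {ω | t ≤ (((Finset.Icc 2 n).filter fun j =>
      X j ω ∈ Metric.ball ((r : ℂ) * X 1 ω) ρ).card : ℝ)} = G := by
    ext ω
    simp only [Set.mem_setOf_eq, hGdef]
    rw [hScard ω]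
  rw [hEG]
  have hcompl : (P Gᶜ).toReal = 1 - (P G).toReal := by
    rw [prob_compl_eq_one_sub hGm,
      ENNReal.toReal_sub_of_le prob_le_one ENNReal.one_ne_top, ENNReal.toReal_one]
  rw [hcompl] at hbadR
  linarith
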